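/- Let G ∈ ℝ^{m×n₂} with m ≤ n₂, let H̄ ∈ ℝ^{n₂×n₂} be symmetric positive definite, and let D* ∈ ℝ^{m×m} be diagonal with strictly positive diagonal entries. Then the symmetric matrix M̄ = [[−H̄, Gᵀ],[G, D*]] has exactly n₂ negative and m positive eigenvalues, and: (i) every negative eigenvalue μ̄ satisfies μ̄ ≤ −λ_min(H̄) and μ̄ ≥ (1/2)( (min_j D*_{jj} − λ_max(H̄)) − [ (λ_max(H̄) + min_j D*_{jj})² + 4σ_max(G)² ]^{1/2} ); (ii) every positive eigenvalue μ̄ satisfies μ̄ ≤ (1/2)( max_j D*_{jj} + [ (max_j D*_{jj})² + 4σ_max(G)² ]^{1/2} ) and μ̄ ≥ (1/2)( (min_j D*_{jj} − λ_max(H̄)) + [ (λ_max(H̄) + min_j D*_{jj})² + 4σ_min(G)² ]^{1/2} ). -/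

import Mathlib

open Matrix

/-- Spectral norm (largest singular value) of a real matrix. -/
noncomputable def specNorm {m n : ℕ} (A : Matrix (Fin m) (Fin n) ℝ) : ℝ :=
  Real.sqrt (⨆ i, (Matrix.isHermitian_mul_conjTranspose_self A).eigenvalues i)

/-- Smallest singular value of G (for m ≤ n): σ_min(G)² = λ_min(G Gᵀ). -/
noncomputable def sigMin {m n : ℕ} (A : Matrix (Fin m) (Fin n) ℝ) : ℝ :=
  Real.sqrt (⨅ i, (Matrix.isHermitian_mul_conjTranspose_self A).eigenvalues i)


set_option linter.unusedSectionVars false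
set_option maxHeartbeats 1000000

section infra
variable {n : Type*} [Fintype n] [DecidableEq n]

/-- coordinates of a vector in the eigenbasis of a hermitian matrix -/
noncomputable def eigCoord {A : Matrix n n ℝ} (hA : A.IsHermitian) (x : n → ℝ) : n → ℝ :=
  fun i => hA.eigenvectorBasis.repr ((WithLp.equiv 2 (n → ℝ)).symm x) i

lemma eigCoord_def {A : Matrix n n ℝ} (hA : A.IsHermitian) (x : n → ℝ) (i : n) :
    eigCoord hA x i = ⇑(hA.eigenvectorBasis i) ⬝ᵥ x := by
  rw [eigCoord, hA.eigenvectorBasis.repr_apply_apply]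
  simp [PiLp.inner_apply, dotProduct, RCLike.inner_apply, WithLp.equiv]
  exact Finset.sum_congr rfl fun _ _ => mul_comm _ _

lemma eigCoord_dot {A : Matrix n n ℝ} (hA : A.IsHermitian) (x y : n → ℝ) :
    x ⬝ᵥ y = ∑ i, eigCoord hA x i * eigCoord hA y i := by
  have h := hA.eigenvectorBasis.repr.inner_map_map
    ((WithLp.equiv 2 (n → ℝ)).symm x) ((WithLp.equiv 2 (n → ℝ)).symm y)
  simp only [PiLp.inner_apply, RCLike.inner_apply, starRingEnd_apply, star_trivial] at h
  rw [dotProduct_comm, show y ⬝ᵥ x = ∑ i, (WithLp.equiv 2 (n → ℝ)).symm y i * (WithLp.equiv 2 (n → ℝ)).symm x i from rfl, ← h]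
  exact Finset.sum_congr rfl fun _ _ => mul_comm _ _

lemma eigCoord_add {A : Matrix n n ℝ} (hA : A.IsHermitian) (x y : n → ℝ) (i : n) :
    eigCoord hA (x + y) i = eigCoord hA x i + eigCoord hA y i := by
  simp [eigCoord_def, dotProduct_add]

lemma eigCoord_smul {A : Matrix n n ℝ} (hA : A.IsHermitian) (c : ℝ) (x : n → ℝ) (i : n) :
    eigCoord hA (c • x) i = c * eigCoord hA x i := by
  simp [eigCoord_def, dotProduct_smul]

lemma eigCoord_mulVec {A : Matrix n n ℝ} (hA : A.IsHermitian) (x : n → ℝ) (i : n) :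
    eigCoord hA (A.mulVec x) i = hA.eigenvalues i * eigCoord hA x i := by
  have ht : Aᵀ = A := by
    rw [← conjTranspose_eq_transpose_of_trivial]; exact hA.eq
  rw [eigCoord_def, eigCoord_def, dotProduct_mulVec, ← mulVec_transpose, ht,
    hA.mulVec_eigenvectorBasis, smul_dotProduct]
  rfl

lemma dot_self_nonneg (x : n → ℝ) : 0 ≤ x ⬝ᵥ x :=
  Finset.sum_nonneg fun i _ => mul_self_nonneg (x i)

lemma dot_self_pos {x : n → ℝ} (hx : x ≠ 0) : 0 < x ⬝ᵥ x :=
  lt_of_le_of_ne (dot_self_nonneg x) fun h => hx (dotProduct_self_eq_zero.mp h.symm)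

lemma eigCoord_norm {A : Matrix n n ℝ} (hA : A.IsHermitian) (x : n → ℝ) :
    x ⬝ᵥ x = ∑ i, eigCoord hA x i ^ 2 := by
  rw [eigCoord_dot hA x x]; exact Finset.sum_congr rfl fun i _ => (sq _).symm

lemma quadform_eigCoord {A : Matrix n n ℝ} (hA : A.IsHermitian) (x : n → ℝ) :
    x ⬝ᵥ A.mulVec x = ∑ i, hA.eigenvalues i * eigCoord hA x i ^ 2 := by
  rw [eigCoord_dot hA x (A.mulVec x)]
  exact Finset.sum_congr rfl fun i _ => by rw [eigCoord_mulVec]; ring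

lemma quadform_le_sup {A : Matrix n n ℝ} (hA : A.IsHermitian) (x : n → ℝ) :
    x ⬝ᵥ A.mulVec x ≤ (⨆ i, hA.eigenvalues i) * (x ⬝ᵥ x) := by
  rw [quadform_eigCoord hA x, eigCoord_norm hA x, Finset.mul_sum]
  refine Finset.sum_le_sum fun i _ => ?_
  exact mul_le_mul_of_nonneg_right
    (le_ciSup (Set.Finite.bddAbove (Set.finite_range _)) i) (sq_nonneg _)

lemma inf_le_quadform {A : Matrix n n ℝ} (hA : A.IsHermitian) (x : n → ℝ) :
    (⨅ i, hA.eigenvalues i) * (x ⬝ᵥ x) ≤ x ⬝ᵥ A.mulVec x := by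
  rw [quadform_eigCoord hA x, eigCoord_norm hA x, Finset.mul_sum]
  refine Finset.sum_le_sum fun i _ => ?_
  exact mul_le_mul_of_nonneg_right
    (ciInf_le (Set.Finite.bddBelow (Set.finite_range _)) i) (sq_nonneg _)

end infra

noncomputable def specNorm' {m n : ℕ} (A : Matrix (Fin m) (Fin n) ℝ) : ℝ :=
  Real.sqrt (⨆ i, (Matrix.isHermitian_mul_conjTranspose_self A).eigenvalues i)

section sv
variable {m n : ℕ} (G : Matrix (Fin m) (Fin n) ℝ)

lemma sup_eig_nonneg : 0 ≤ ⨆ i, (isHermitian_mul_conjTranspose_self G).eigenvalues i := by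
  rcases isEmpty_or_nonempty (Fin m) with h | h
  · rw [Real.iSup_of_isEmpty]
  · exact le_trans (eigenvalues_self_mul_conjTranspose_nonneg G (Classical.arbitrary _))
      (le_ciSup (Set.Finite.bddAbove (Set.finite_range _)) _)

lemma inf_eig_nonneg : 0 ≤ ⨅ i, (isHermitian_mul_conjTranspose_self G).eigenvalues i := by
  rcases isEmpty_or_nonempty (Fin m) with h | h
  · rw [Real.iInf_of_isEmpty]
  · exact le_ciInf fun i => eigenvalues_self_mul_conjTranspose_nonneg G i

lemma sq_specNorm' : specNorm' G ^ 2 = ⨆ i, (isHermitian_mul_conjTranspose_self G).eigenvalues i :=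
  Real.sq_sqrt (sup_eig_nonneg G)

lemma dot_GGH (w : Fin m → ℝ) :
    (Gᵀ.mulVec w) ⬝ᵥ (Gᵀ.mulVec w) = w ⬝ᵥ (G * Gᴴ).mulVec w := by
  rw [← mulVec_mulVec, dotProduct_mulVec w, ← mulVec_transpose,
    conjTranspose_eq_transpose_of_trivial]

lemma transpose_mulVec_le (w : Fin m → ℝ) :
    (Gᵀ.mulVec w) ⬝ᵥ (Gᵀ.mulVec w) ≤ specNorm' G ^ 2 * (w ⬝ᵥ w) := by
  rw [dot_GGH, sq_specNorm']
  exact quadform_le_sup _ w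

lemma sigMin_le_transpose_mulVec (w : Fin m → ℝ) :
    (⨅ i, (isHermitian_mul_conjTranspose_self G).eigenvalues i) * (w ⬝ᵥ w)
      ≤ (Gᵀ.mulVec w) ⬝ᵥ (Gᵀ.mulVec w) := by
  rw [dot_GGH]
  exact inf_le_quadform _ w

lemma mulVec_G_le (u : Fin n → ℝ) :
    (G.mulVec u) ⬝ᵥ (G.mulVec u) ≤ specNorm' G ^ 2 * (u ⬝ᵥ u) := by
  set w := G.mulVec u with hw
  set s := w ⬝ᵥ w with hs
  have h1 : s ^ 2 ≤ ((Gᵀ.mulVec w) ⬝ᵥ (Gᵀ.mulVec w)) * (u ⬝ᵥ u) := by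
    have : s = (Gᵀ.mulVec w) ⬝ᵥ u := by
      rw [hs, hw, dotProduct_mulVec w, ← mulVec_transpose]
    rw [this]
    simpa only [dotProduct, pow_two] using
      Finset.sum_mul_sq_le_sq_mul_sq Finset.univ (Gᵀ.mulVec w) u
  have h2 := transpose_mulVec_le G w
  have hu := dot_self_nonneg u
  rcases (dot_self_nonneg w).eq_or_lt with hs0 | hs0
  · rw [hs, ← hs0]
    positivity
  · nlinarith [mul_le_mul_of_nonneg_right h2 hu]

end sv

lemma specNorm_eq {m n : ℕ} (A : Matrix (Fin m) (Fin n) ℝ) : specNorm A = specNorm' A := rfl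

lemma sq_sigMin {m n : ℕ} (G : Matrix (Fin m) (Fin n) ℝ) :
    sigMin G ^ 2 = ⨅ i, (isHermitian_mul_conjTranspose_self G).eigenvalues i :=
  Real.sq_sqrt (inf_eig_nonneg G)

/-- Theorem 3.4 of the paper: with `H̄` symmetric positive definite and `D*` diagonal
positive, `M̄ = [[−H̄, Gᵀ],[G, D*]]` has exactly `n₂` negative and `m` positive
eigenvalues, every negative eigenvalue `μ̄` satisfies
`μ̄ ≤ −λ_min(H̄)` and
`μ̄ ≥ ½((min_j D*_jj − λ_max(H̄)) − √((λ_max(H̄) + min_j D*_jj)² + 4σ_max(G)²))`,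
and every positive eigenvalue `μ̄` satisfies
`μ̄ ≤ ½(max_j D*_jj + √((max_j D*_jj)² + 4σ_max(G)²))` and
`μ̄ ≥ ½((min_j D*_jj − λ_max(H̄)) + √((λ_max(H̄) + min_j D*_jj)² + 4σ_min(G)²))`. -/
theorem stmt_19 {m n₂ : ℕ} (hmn : m ≤ n₂) (G : Matrix (Fin m) (Fin n₂) ℝ)
    (H : Matrix (Fin n₂) (Fin n₂) ℝ) (hH : H.PosDef)
    (e : Fin m → ℝ) (he : ∀ i, 0 < e i)
    (M : Matrix (Fin n₂ ⊕ Fin m) (Fin n₂ ⊕ Fin m) ℝ)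
    (hMdef : M = Matrix.fromBlocks (-H) Gᵀ G (Matrix.diagonal e))
    (hM : M.IsHermitian) :
    (Finset.univ.filter fun i => hM.eigenvalues i < 0).card = n₂ ∧
    (Finset.univ.filter fun i => 0 < hM.eigenvalues i).card = m ∧
    (∀ μ : ℝ, μ < 0 →
      ∀ x : Fin n₂ ⊕ Fin m → ℝ, x ≠ 0 → M.mulVec x = μ • x →
      (μ ≤ -(⨅ i, hH.1.eigenvalues i)) ∧
      ((1 / 2) * (((⨅ j, e j) - ⨆ i, hH.1.eigenvalues i) -
        Real.sqrt (((⨆ i, hH.1.eigenvalues i) + ⨅ j, e j) ^ 2 +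
          4 * specNorm G ^ 2)) ≤ μ)) ∧
    (∀ μ : ℝ, 0 < μ →
      ∀ x : Fin n₂ ⊕ Fin m → ℝ, x ≠ 0 → M.mulVec x = μ • x →
      (μ ≤ (1 / 2) * ((⨆ j, e j) +
        Real.sqrt ((⨆ j, e j) ^ 2 + 4 * specNorm G ^ 2))) ∧
      ((1 / 2) * (((⨅ j, e j) - ⨆ i, hH.1.eigenvalues i) +
        Real.sqrt (((⨆ i, hH.1.eigenvalues i) + ⨅ j, e j) ^ 2 +
          4 * sigMin G ^ 2)) ≤ μ)) := by
  subst hMdef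
  have ht0 : (0:ℝ) ≤ specNorm G := Real.sqrt_nonneg _
  have hlamax0 : (0:ℝ) ≤ ⨆ i, hH.1.eigenvalues i := by
    rcases isEmpty_or_nonempty (Fin n₂) with h | h
    · rw [Real.iSup_of_isEmpty]
    · exact le_trans (hH.eigenvalues_pos (Classical.arbitrary _)).le
        (le_ciSup (Set.Finite.bddAbove (Set.finite_range _)) _)
  have hlamaxle : ∀ i, hH.1.eigenvalues i ≤ ⨆ i, hH.1.eigenvalues i :=
    fun i => le_ciSup (Set.Finite.bddAbove (Set.finite_range _)) i
  have hlaminle : ∀ i, (⨅ i, hH.1.eigenvalues i) ≤ hH.1.eigenvalues i :=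
    fun i => ciInf_le (Set.Finite.bddBelow (Set.finite_range _)) i
  have hemin0 : (0:ℝ) ≤ ⨅ j, e j := by
    rcases isEmpty_or_nonempty (Fin m) with h | h
    · rw [Real.iInf_of_isEmpty]
    · exact le_ciInf fun j => (he j).le
  have heminle : ∀ j, (⨅ j, e j) ≤ e j :=
    fun j => ciInf_le (Set.Finite.bddBelow (Set.finite_range _)) j
  have hemaxle : ∀ j, e j ≤ ⨆ j, e j :=
    fun j => le_ciSup (Set.Finite.bddAbove (Set.finite_range _)) j
  have hHpos : ∀ u : Fin n₂ → ℝ, u ≠ 0 → 0 < u ⬝ᵥ (H *ᵥ u) := by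
    intro u hu
    simpa using hH.dotProduct_mulVec_pos hu
  have hHnn : ∀ u : Fin n₂ → ℝ, 0 ≤ u ⬝ᵥ (H *ᵥ u) := by
    intro u
    by_cases hu : u = 0
    · simp [hu]
    · exact (hHpos u hu).le
  have hdotGT : ∀ (u : Fin n₂ → ℝ) (v : Fin m → ℝ), u ⬝ᵥ (Gᵀ *ᵥ v) = (G *ᵥ u) ⬝ᵥ v := by
    intro u v
    rw [dotProduct_mulVec, ← mulVec_transpose, transpose_transpose]
  have hdotG : ∀ (u : Fin n₂ → ℝ) (v : Fin m → ℝ), v ⬝ᵥ (G *ᵥ u) = (Gᵀ *ᵥ v) ⬝ᵥ u := by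
    intro u v
    rw [dotProduct_mulVec, ← mulVec_transpose]
  have eigsplit : ∀ (μ : ℝ) (x : Fin n₂ ⊕ Fin m → ℝ),
      (fromBlocks (-H) Gᵀ G (diagonal e)) *ᵥ x = μ • x →
      ((-H) *ᵥ (x ∘ Sum.inl) + Gᵀ *ᵥ (x ∘ Sum.inr) = μ • (x ∘ Sum.inl)) ∧
      (G *ᵥ (x ∘ Sum.inl) + (diagonal e) *ᵥ (x ∘ Sum.inr) = μ • (x ∘ Sum.inr)) := by
    intro μ x hx
    rw [fromBlocks_mulVec] at hx
    constructor
    · funext i; have := congrFun hx (Sum.inl i); simpa using this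
    · funext j; have := congrFun hx (Sum.inr j); simpa using this
  have qform : ∀ (u : Fin n₂ → ℝ) (v : Fin m → ℝ),
      (Sum.elim u v) ⬝ᵥ ((fromBlocks (-H) Gᵀ G (diagonal e)) *ᵥ (Sum.elim u v)) =
      -(u ⬝ᵥ (H *ᵥ u)) + u ⬝ᵥ (Gᵀ *ᵥ v) + (v ⬝ᵥ (G *ᵥ u) + ∑ j, e j * (v j * v j)) := by
    intro u v
    rw [fromBlocks_mulVec]
    simp only [Sum.elim_comp_inl, Sum.elim_comp_inr]
    rw [sumElim_dotProduct_sumElim, dotProduct_add, dotProduct_add, neg_mulVec,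
      dotProduct_neg]
    congr 1
    congr 1
    simp only [dotProduct, mulVec_diagonal]
    exact Finset.sum_congr rfl fun j _ => by ring
  have negpart : ∀ μ : ℝ, μ < 0 →
      ∀ x : Fin n₂ ⊕ Fin m → ℝ, x ≠ 0 →
      (fromBlocks (-H) Gᵀ G (diagonal e)) *ᵥ x = μ • x →
      (μ ≤ -(⨅ i, hH.1.eigenvalues i)) ∧
      ((1 / 2) * (((⨅ j, e j) - ⨆ i, hH.1.eigenvalues i) -
        Real.sqrt (((⨆ i, hH.1.eigenvalues i) + ⨅ j, e j) ^ 2 +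
          4 * specNorm G ^ 2)) ≤ μ) := by
    intro μ hμ x hx hEq
    obtain ⟨heq1, heq2⟩ := eigsplit μ x hEq
    set u := x ∘ Sum.inl with hu
    set v := x ∘ Sum.inr with hv
    have hGu : ∀ j, (G *ᵥ u) j = (μ - e j) * v j := by
      intro j
      have := congrFun heq2 j
      simp only [Pi.add_apply, mulVec_diagonal, Pi.smul_apply, smul_eq_mul] at this
      linarith
    have hune : u ≠ 0 := by
      intro h0
      apply hx
      have hv0 : ∀ j, v j = 0 := by
        intro j
        have h1 := hGu j
        rw [h0, mulVec_zero] at h1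
        have hne : μ - e j ≠ 0 := by nlinarith [he j]
        have : (0:ℝ) = (μ - e j) * v j := h1
        rcases mul_eq_zero.mp this.symm with h | h
        · exact absurd h hne
        · exact h
      funext i
      cases i with
      | inl i => exact congrFun h0 i
      | inr j => exact hv0 j
    have hU : 0 < u ⬝ᵥ u := dot_self_pos hune
    have E1 : μ * (u ⬝ᵥ u) = -(u ⬝ᵥ (H *ᵥ u)) + u ⬝ᵥ (Gᵀ *ᵥ v) := by
      have h1 := congrArg (fun w => u ⬝ᵥ w) heq1
      simp only [dotProduct_add, neg_mulVec, dotProduct_neg, dotProduct_smul,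
        smul_eq_mul] at h1
      linarith
    have hS : u ⬝ᵥ (Gᵀ *ᵥ v) = ∑ j, (μ - e j) * (v j)^2 := by
      rw [hdotGT]
      simp only [dotProduct]
      exact Finset.sum_congr rfl fun j _ => by rw [hGu j]; ring
    constructor
    · have hS0 : u ⬝ᵥ (Gᵀ *ᵥ v) ≤ 0 := by
        rw [hS]
        refine Finset.sum_nonpos fun j _ => ?_
        nlinarith [he j, sq_nonneg (v j)]
      have hq := inf_le_quadform hH.1 u
      nlinarith [hU]
    · set t := specNorm G with htdef
      set lamax := ⨆ i, hH.1.eigenvalues i with hlamaxdef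
      set emin := ⨅ j, e j with hemindef
      have hc : μ - emin < 0 := by linarith [hemin0]
      have hSc : (u ⬝ᵥ (Gᵀ *ᵥ v)) * (μ - emin) ≤ (G *ᵥ u) ⬝ᵥ (G *ᵥ u) := by
        rw [hS, Finset.sum_mul]
        have hWsum : (G *ᵥ u) ⬝ᵥ (G *ᵥ u) = ∑ j, ((μ - e j) * v j)^2 := by
          simp only [dotProduct]
          exact Finset.sum_congr rfl fun j _ => by rw [hGu j]; ring
        rw [hWsum]
        refine Finset.sum_le_sum fun j _ => ?_
        nlinarith [mul_nonneg (mul_nonneg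
          (by linarith [he j] : (0:ℝ) ≤ e j - μ)
          (by linarith [heminle j] : (0:ℝ) ≤ e j - emin)) (sq_nonneg (v j))]
      have hW := mulVec_G_le G u
      rw [← specNorm_eq] at hW
      have hkeyU : ((μ + lamax) * (μ - emin)) * (u ⬝ᵥ u) ≤ (t^2) * (u ⬝ᵥ u) := by
        have h1 : u ⬝ᵥ (Gᵀ *ᵥ v) ≤ (μ + lamax) * (u ⬝ᵥ u) := by
          have hq := quadform_le_sup hH.1 u
          nlinarith
        have h2 : ((μ + lamax) * (u ⬝ᵥ u)) * (μ - emin) ≤ (u ⬝ᵥ (Gᵀ *ᵥ v)) * (μ - emin) :=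
          mul_le_mul_of_nonpos_right h1 hc.le
        nlinarith
      have hkey : (μ + lamax) * (μ - emin) ≤ t^2 :=
        le_of_mul_le_mul_right hkeyU hU
      have hsq : (emin - lamax - 2*μ)^2 ≤ (lamax + emin)^2 + 4*t^2 := by nlinarith
      have hsqrt : emin - lamax - 2*μ ≤ Real.sqrt ((lamax + emin)^2 + 4*t^2) :=
        Real.le_sqrt_of_sq_le hsq
      linarith
  have hdiagdot : ∀ v : Fin m → ℝ, v ⬝ᵥ ((diagonal e) *ᵥ v) = ∑ j, e j * (v j)^2 := by
    intro v
    simp only [dotProduct, mulVec_diagonal]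
    exact Finset.sum_congr rfl fun j _ => by ring
  have pospart : ∀ μ : ℝ, 0 < μ →
      ∀ x : Fin n₂ ⊕ Fin m → ℝ, x ≠ 0 →
      (fromBlocks (-H) Gᵀ G (diagonal e)) *ᵥ x = μ • x →
      (μ ≤ (1 / 2) * ((⨆ j, e j) +
        Real.sqrt ((⨆ j, e j) ^ 2 + 4 * specNorm G ^ 2))) ∧
      ((1 / 2) * (((⨅ j, e j) - ⨆ i, hH.1.eigenvalues i) +
        Real.sqrt (((⨆ i, hH.1.eigenvalues i) + ⨅ j, e j) ^ 2 +
          4 * sigMin G ^ 2)) ≤ μ) := by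
    intro μ hμ x hx hEq
    obtain ⟨heq1, heq2⟩ := eigsplit μ x hEq
    set u := x ∘ Sum.inl with hu
    set v := x ∘ Sum.inr with hv
    have E1 : μ * (u ⬝ᵥ u) = -(u ⬝ᵥ (H *ᵥ u)) + u ⬝ᵥ (Gᵀ *ᵥ v) := by
      have h1 := congrArg (fun w => u ⬝ᵥ w) heq1
      simp only [dotProduct_add, neg_mulVec, dotProduct_neg, dotProduct_smul,
        smul_eq_mul] at h1
      linarith
    have E2 : μ * (v ⬝ᵥ v) = v ⬝ᵥ (G *ᵥ u) + ∑ j, e j * (v j)^2 := by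
      have h1 := congrArg (fun w => v ⬝ᵥ w) heq2
      simp only [dotProduct_add, dotProduct_smul, smul_eq_mul] at h1
      rw [hdiagdot] at h1
      linarith
    have hvne : v ≠ 0 := by
      intro h0
      have hGu0 : G *ᵥ u = 0 := by
        have := heq2
        rw [h0, mulVec_zero, smul_zero, add_zero] at this
        exact this
      have hune : u ≠ 0 := by
        intro h0u
        apply hx
        funext i
        cases i with
        | inl i => exact congrFun h0u i
        | inr j => exact congrFun h0 j
      have hz : u ⬝ᵥ (Gᵀ *ᵥ v) = 0 := by
        rw [hdotGT, hGu0, zero_dotProduct]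
      nlinarith [hHpos u hune, dot_self_pos hune, E1]
    have hV : 0 < v ⬝ᵥ v := dot_self_pos hvne
    have hmNE : Nonempty (Fin m) := by
      by_contra h
      rw [not_nonempty_iff] at h
      exact hvne (funext fun j => (IsEmpty.false j).elim)
    have hemax0 : (0:ℝ) ≤ ⨆ j, e j :=
      le_trans (he (Classical.arbitrary _)).le (hemaxle _)
    have hvsq : v ⬝ᵥ v = ∑ j, (v j)^2 := by
      simp only [dotProduct]
      exact Finset.sum_congr rfl fun j _ => (sq _).symm
    constructor
    · -- upper bound
      set t := specNorm G with htdef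
      set emax := ⨆ j, e j with hemaxdef
      have hkey : μ * (μ - emax) ≤ t^2 := by
        rcases le_or_gt μ emax with hcase | hcase
        · nlinarith [sq_nonneg t]
        · have hDle : ∑ j, e j * (v j)^2 ≤ emax * (v ⬝ᵥ v) := by
            rw [hvsq, Finset.mul_sum]
            exact Finset.sum_le_sum fun j _ =>
              mul_le_mul_of_nonneg_right (hemaxle j) (sq_nonneg _)
          have hA : (μ - emax) * (v ⬝ᵥ v) ≤ v ⬝ᵥ (G *ᵥ u) := by nlinarith [E2]
          have hW := mulVec_G_le G u
          rw [← specNorm_eq] at hW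
          have hCS : (v ⬝ᵥ (G *ᵥ u))^2 ≤ ((G *ᵥ u) ⬝ᵥ (G *ᵥ u)) * (v ⬝ᵥ v) := by
            have hc : v ⬝ᵥ (G *ᵥ u) = ∑ i, (G *ᵥ u) i * v i :=
              Finset.sum_congr rfl fun i _ => mul_comm _ _
            rw [hc]
            simpa only [dotProduct, pow_two] using
              Finset.sum_mul_sq_le_sq_mul_sq Finset.univ (G *ᵥ u) v
          rcases (dot_self_nonneg u).eq_or_lt with hU0 | hU0
          · have hu0 : u = 0 := dotProduct_self_eq_zero.mp hU0.symm
            rw [hu0, mulVec_zero, dotProduct_zero] at hA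
            nlinarith
          · have hMuU : μ * (u ⬝ᵥ u) ≤ v ⬝ᵥ (G *ᵥ u) := by
              have hcm : u ⬝ᵥ (Gᵀ *ᵥ v) = v ⬝ᵥ (G *ᵥ u) := by
                rw [hdotGT]; exact dotProduct_comm _ _
              nlinarith [hHnn u, E1]
            have hA0 : 0 < v ⬝ᵥ (G *ᵥ u) := lt_of_lt_of_le (mul_pos hμ hU0) hMuU
            nlinarith [mul_le_mul hA hMuU (mul_pos hμ hU0).le (le_trans (mul_pos hμ hU0).le hMuU),
              mul_le_mul_of_nonneg_right hW hV.le, hCS, mul_pos hU0 hV]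
      have hsq : (2*μ - emax)^2 ≤ emax^2 + 4*t^2 := by nlinarith
      have hsqrt : 2*μ - emax ≤ Real.sqrt (emax^2 + 4*t^2) :=
        Real.le_sqrt_of_sq_le hsq
      linarith
    · -- lower bound
      set s := sigMin G with hsdef
      set lamax := ⨆ i, hH.1.eigenvalues i with hlamaxdef
      set emin := ⨅ j, e j with hemindef
      have hw : Gᵀ *ᵥ v = μ • u + H *ᵥ u := by
        funext i
        have := congrFun heq1 i
        simp only [Pi.add_apply, Pi.smul_apply, smul_eq_mul, neg_mulVec, Pi.neg_apply] at this ⊢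
        linarith
      have hcw : ∀ i, eigCoord hH.1 (Gᵀ *ᵥ v) i =
          (μ + hH.1.eigenvalues i) * eigCoord hH.1 u i := by
        intro i
        rw [hw, eigCoord_add, eigCoord_smul, eigCoord_mulVec]
        ring
      have hAe : (Gᵀ *ᵥ v) ⬝ᵥ u = ∑ i, (μ + hH.1.eigenvalues i) * (eigCoord hH.1 u i)^2 := by
        rw [eigCoord_dot hH.1]
        exact Finset.sum_congr rfl fun i _ => by rw [hcw i]; ring
      have hWe : (Gᵀ *ᵥ v) ⬝ᵥ (Gᵀ *ᵥ v) =
          ∑ i, (μ + hH.1.eigenvalues i)^2 * (eigCoord hH.1 u i)^2 := by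
        rw [eigCoord_dot hH.1]
        exact Finset.sum_congr rfl fun i _ => by rw [hcw i]; ring
      have h1 : (Gᵀ *ᵥ v) ⬝ᵥ (Gᵀ *ᵥ v) ≤ (μ + lamax) * ((Gᵀ *ᵥ v) ⬝ᵥ u) := by
        rw [hAe, hWe, Finset.mul_sum]
        refine Finset.sum_le_sum fun i _ => ?_
        nlinarith [mul_nonneg (mul_nonneg
          (by linarith [hH.eigenvalues_pos i] : (0:ℝ) ≤ μ + hH.1.eigenvalues i)
          (by linarith [hlamaxle i] : (0:ℝ) ≤ lamax - hH.1.eigenvalues i))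
          (sq_nonneg (eigCoord hH.1 u i))]
      have h2 : s^2 * (v ⬝ᵥ v) ≤ (Gᵀ *ᵥ v) ⬝ᵥ (Gᵀ *ᵥ v) := by
        rw [hsdef, sq_sigMin]
        exact sigMin_le_transpose_mulVec G v
      have hDe : emin * (v ⬝ᵥ v) ≤ ∑ j, e j * (v j)^2 := by
        rw [hvsq, Finset.mul_sum]
        exact Finset.sum_le_sum fun j _ =>
          mul_le_mul_of_nonneg_right (heminle j) (sq_nonneg _)
      have h3 : (Gᵀ *ᵥ v) ⬝ᵥ u ≤ (μ - emin) * (v ⬝ᵥ v) := by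
        have := hdotG u v
        nlinarith [E2, hDe]
      have hml : 0 < μ + lamax := by linarith
      have hkey2 : s^2 ≤ (μ - emin) * (μ + lamax) := by
        have h4 := mul_le_mul_of_nonneg_left h3 hml.le
        nlinarith [hV, h1, h2]
      have hmu_emin : emin ≤ μ := by
        by_contra hlt
        push_neg at hlt
        nlinarith [sq_nonneg s]
      have hrhs : 0 ≤ 2*μ + lamax - emin := by linarith
      have hle : Real.sqrt ((lamax + emin)^2 + 4*s^2) ≤ 2*μ + lamax - emin := by
        rw [show (2*μ + lamax - emin) = Real.sqrt ((2*μ + lamax - emin)^2) from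
          (Real.sqrt_sq hrhs).symm]
        exact Real.sqrt_le_sqrt (by nlinarith)
      linarith
  classical
  have hqnn : ∀ (y : Fin n₂ ⊕ Fin m → ℝ),
      (∀ i, hM.eigenvalues i < 0 → eigCoord hM y i = 0) →
      0 ≤ y ⬝ᵥ ((fromBlocks (-H) Gᵀ G (diagonal e)) *ᵥ y) := by
    intro y hy
    rw [quadform_eigCoord hM y]
    refine Finset.sum_nonneg fun i _ => ?_
    rcases lt_or_ge (hM.eigenvalues i) 0 with h | h
    · rw [hy i h]; simp
    · positivity
  have hqnp : ∀ (y : Fin n₂ ⊕ Fin m → ℝ),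
      (∀ i, 0 < hM.eigenvalues i → eigCoord hM y i = 0) →
      y ⬝ᵥ ((fromBlocks (-H) Gᵀ G (diagonal e)) *ᵥ y) ≤ 0 := by
    intro y hy
    rw [quadform_eigCoord hM y]
    refine Finset.sum_nonpos fun i _ => ?_
    rcases lt_or_ge 0 (hM.eigenvalues i) with h | h
    · rw [hy i h]; simp
    · exact mul_nonpos_of_nonpos_of_nonneg h (sq_nonneg _)
  have hneg_ge : n₂ ≤ (Finset.univ.filter fun i => hM.eigenvalues i < 0).card := by
    set S := Finset.univ.filter fun i : Fin n₂ ⊕ Fin m => hM.eigenvalues i < 0 with hS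
    let f : (Fin n₂ → ℝ) →ₗ[ℝ] (S → ℝ) :=
      { toFun := fun u i => eigCoord hM (Sum.elim u 0) i.1
        map_add' := by
          intro a b
          funext i
          have hel : (Sum.elim (a + b) (0 : Fin m → ℝ)) = Sum.elim a 0 + Sum.elim b 0 := by
            funext k; cases k <;> simp
          simp [hel, eigCoord_add]
        map_smul' := by
          intro c a
          funext i
          have hel : (Sum.elim (c • a) (0 : Fin m → ℝ)) = c • Sum.elim a 0 := by
            funext k; cases k <;> simp
          simp [hel, eigCoord_smul] }
    have hinj : Function.Injective f := by
      rw [injective_iff_map_eq_zero]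
      intro u h0
      by_contra hune
      have hcoord : ∀ i, hM.eigenvalues i < 0 → eigCoord hM (Sum.elim u 0) i = 0 := by
        intro i hi
        have hiS : i ∈ S := by simp [hS, hi]
        exact congrFun h0 ⟨i, hiS⟩
      have h1 := hqnn (Sum.elim u 0) hcoord
      rw [qform u 0] at h1
      simp only [mulVec_zero, dotProduct_zero, zero_dotProduct] at h1
      have := hHpos u hune
      simp at h1
      linarith
    calc n₂ = Module.finrank ℝ (Fin n₂ → ℝ) := by
          rw [Module.finrank_pi]; simp
      _ ≤ Module.finrank ℝ (S → ℝ) := LinearMap.finrank_le_finrank_of_injective hinj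
      _ = S.card := by rw [Module.finrank_pi]; exact Fintype.card_coe S
  have hdetH : IsUnit H.det := isUnit_iff_ne_zero.mpr hH.det_pos.ne'
  have hpos_ge : m ≤ (Finset.univ.filter fun i => 0 < hM.eigenvalues i).card := by
    set S := Finset.univ.filter fun i : Fin n₂ ⊕ Fin m => 0 < hM.eigenvalues i with hS
    let f : (Fin m → ℝ) →ₗ[ℝ] (S → ℝ) :=
      { toFun := fun v i => eigCoord hM (Sum.elim (H⁻¹ *ᵥ (Gᵀ *ᵥ v)) v) i.1
        map_add' := by
          intro a b
          funext i
          have hel : (Sum.elim (H⁻¹ *ᵥ (Gᵀ *ᵥ (a + b))) (a + b)) =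
              Sum.elim (H⁻¹ *ᵥ (Gᵀ *ᵥ a)) a + Sum.elim (H⁻¹ *ᵥ (Gᵀ *ᵥ b)) b := by
            funext k; cases k <;> simp [mulVec_add]
          show eigCoord hM (Sum.elim (H⁻¹ *ᵥ (Gᵀ *ᵥ (a + b))) (a + b)) i.1 =
            eigCoord hM (Sum.elim (H⁻¹ *ᵥ (Gᵀ *ᵥ a)) a) i.1 +
            eigCoord hM (Sum.elim (H⁻¹ *ᵥ (Gᵀ *ᵥ b)) b) i.1
          rw [hel]
          exact eigCoord_add hM _ _ _
        map_smul' := by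
          intro c a
          funext i
          have hel : (Sum.elim (H⁻¹ *ᵥ (Gᵀ *ᵥ (c • a))) (c • a)) =
              c • Sum.elim (H⁻¹ *ᵥ (Gᵀ *ᵥ a)) a := by
            funext k; cases k <;> simp [mulVec_smul]
          show eigCoord hM (Sum.elim (H⁻¹ *ᵥ (Gᵀ *ᵥ (c • a))) (c • a)) i.1 =
            c * eigCoord hM (Sum.elim (H⁻¹ *ᵥ (Gᵀ *ᵥ a)) a) i.1
          rw [hel]
          exact eigCoord_smul hM _ _ _ }
    have hinj : Function.Injective f := by
      rw [injective_iff_map_eq_zero]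
      intro v h0
      by_contra hvne
      set u := H⁻¹ *ᵥ (Gᵀ *ᵥ v) with hudef
      have hHu : H *ᵥ u = Gᵀ *ᵥ v := by
        rw [hudef, mulVec_mulVec, Matrix.mul_nonsing_inv H hdetH, one_mulVec]
      have hcoord : ∀ i, 0 < hM.eigenvalues i → eigCoord hM (Sum.elim u v) i = 0 := by
        intro i hi
        have hiS : i ∈ S := by simp [hS, hi]
        exact congrFun h0 ⟨i, hiS⟩
      have h1 := hqnp (Sum.elim u v) hcoord
      rw [qform u v] at h1
      have e1 : u ⬝ᵥ (Gᵀ *ᵥ v) = u ⬝ᵥ (H *ᵥ u) := by rw [hHu]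
      have e2 : v ⬝ᵥ (G *ᵥ u) = u ⬝ᵥ (H *ᵥ u) := by
        rw [hdotG, ← hHu]
        exact dotProduct_comm _ _
      obtain ⟨j, hj⟩ := Function.ne_iff.mp hvne
      have hj' : v j ≠ 0 := hj
      have hsum : 0 < ∑ j, e j * (v j * v j) := by
        refine Finset.sum_pos' (fun k _ => by nlinarith [he k, mul_self_nonneg (v k)])
          ⟨j, Finset.mem_univ j, by nlinarith [he j, mul_self_pos.mpr hj']⟩
      linarith [hHnn u]
    calc m = Module.finrank ℝ (Fin m → ℝ) := by
          rw [Module.finrank_pi]; simp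
      _ ≤ Module.finrank ℝ (S → ℝ) := LinearMap.finrank_le_finrank_of_injective hinj
      _ = S.card := by rw [Module.finrank_pi]; exact Fintype.card_coe S
  have hdisj : Disjoint (Finset.univ.filter fun i => hM.eigenvalues i < 0)
      (Finset.univ.filter fun i => 0 < hM.eigenvalues i) := by
    rw [Finset.disjoint_left]
    intro i hi hi'
    rw [Finset.mem_filter] at hi hi'
    linarith [hi.2, hi'.2]
  have htot : (Finset.univ.filter fun i => hM.eigenvalues i < 0).card +
      (Finset.univ.filter fun i => 0 < hM.eigenvalues i).card ≤ n₂ + m := by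
    have h1 := Finset.card_le_univ ((Finset.univ.filter fun i => hM.eigenvalues i < 0) ∪
      (Finset.univ.filter fun i => 0 < hM.eigenvalues i))
    rw [Finset.card_union_of_disjoint hdisj] at h1
    simpa [Fintype.card_sum] using h1
  exact ⟨by omega, by omega, negpart, pospart⟩
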